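/- arXiv:2401.00716 — 5 statements merged into one kernel-verified Lean document; each statement's English description precedes it below -/
import Mathlib

section
/- For all integers n, m ≥ 1 with n ≠ m, the number of dominating sets of the n×m rook graph R_{n,m} of cardinality min(n,m) equals max(n,m)^{min(n,m)}. -/
open Finset Polynomial

/-- The `n × m` rook graph: vertices are squares `(a,b)`; two distinct squares are
adjacent iff they share a row or a column. -/
def rookGraph (n m : ℕ) : SimpleGraph (Fin n × Fin m) where
  Adj v w := v ≠ w ∧ (v.1 = w.1 ∨ v.2 = w.2)
  symm := by
    constructor
    rintro v w ⟨h1, h2⟩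
    exact ⟨h1.symm, h2.imp Eq.symm Eq.symm⟩
  loopless := by
    constructor
    rintro v ⟨h1, _⟩
    exact h1 rfl

/-- `S` is a dominating set of the `n × m` rook graph. -/
def IsDomSet (n m : ℕ) (S : Finset (Fin n × Fin m)) : Prop :=
  ∀ v, v ∈ S ∨ ∃ u ∈ S, (rookGraph n m).Adj u v

/-- `domCount n m k` is the number of dominating sets of cardinality `k`
of the `n × m` rook graph. -/
noncomputable def domCount (n m k : ℕ) : ℕ :=
  Set.ncard {S : Finset (Fin n × Fin m) | S.card = k ∧ IsDomSet n m S}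

/-- `ECount n m k` is the number of `k`-element subsets of `{1,…,n} × {1,…,m}`
that meet every row and every column. -/
noncomputable def ECount (n m k : ℕ) : ℕ :=
  Set.ncard {T : Finset (Fin n × Fin m) | T.card = k ∧
    (∀ r : Fin n, ∃ c : Fin m, (r, c) ∈ T) ∧ (∀ c : Fin m, ∃ r : Fin n, (r, c) ∈ T)}

/-- The domination polynomial of the `n × m` rook graph, as a polynomial over `ℤ`. -/
noncomputable def domPoly (n m : ℕ) : Polynomial ℤ :=
  ∑ k ∈ Finset.range (n * m + 1), Polynomial.C (domCount n m k : ℤ) * Polynomial.X ^ k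

lemma dom_lt (n m : ℕ) (h : n < m) : domCount n m n = m ^ n := by
  classical
  have hinj2 : ∀ f : Fin n → Fin m, Function.Injective (fun r : Fin n => (r, f r)) :=
    fun f a b hab => (Prod.ext_iff.1 hab).1
  have key : {S : Finset (Fin n × Fin m) | S.card = n ∧ IsDomSet n m S}
      = Set.range (fun f : Fin n → Fin m => (Finset.univ.image fun r => (r, f r))) := by
    ext S
    simp only [Set.mem_setOf_eq, Set.mem_range]
    constructor
    · rintro ⟨hcard, hdom⟩
      have hrow : ∀ r : Fin n, ∃ c, (r, c) ∈ S := by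
        intro r
        by_contra hc
        push_neg at hc
        have hcols : (S.image Prod.snd).card < m :=
          lt_of_le_of_lt (le_trans Finset.card_image_le hcard.le) h
        have hne : ((S.image Prod.snd)ᶜ : Finset (Fin m)).Nonempty := by
          rw [← Finset.card_pos, Finset.card_compl, Fintype.card_fin]
          omega
        obtain ⟨c₀, hc₀⟩ := hne
        rw [Finset.mem_compl, Finset.mem_image] at hc₀
        push_neg at hc₀
        rcases hdom (r, c₀) with hmem | ⟨u, huS, _, hadj⟩
        · exact hc _ hmem
        · obtain ⟨u1, u2⟩ := u
          rcases hadj with h1 | h2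
          · simp only [show u1 = r from h1] at huS
            exact hc _ huS
          · exact hc₀ _ huS h2
      choose f hf using hrow
      refine ⟨f, ?_⟩
      have hsub : (Finset.univ.image fun r => (r, f r)) ⊆ S := by
        intro x hx
        rw [Finset.mem_image] at hx
        obtain ⟨r, _, rfl⟩ := hx
        exact hf r
      have hcard2 : (Finset.univ.image fun r : Fin n => (r, f r)).card = n := by
        rw [Finset.card_image_of_injective _ (hinj2 f), Finset.card_univ, Fintype.card_fin]
      exact Finset.eq_of_subset_of_card_le hsub (by omega)
    · rintro ⟨f, rfl⟩
      refine ⟨?_, ?_⟩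
      · rw [Finset.card_image_of_injective _ (hinj2 f), Finset.card_univ, Fintype.card_fin]
      · intro v
        by_cases hv : v = (v.1, f v.1)
        · left; rw [hv]; exact Finset.mem_image_of_mem _ (Finset.mem_univ _)
        · right
          exact ⟨(v.1, f v.1), Finset.mem_image_of_mem _ (Finset.mem_univ _),
            fun hh => hv hh.symm, Or.inl rfl⟩
  have hinj : Function.Injective
      (fun f : Fin n → Fin m => (Finset.univ.image fun r => (r, f r))) := by
    intro f g hfg
    have hfg' : (Finset.univ.image fun r => (r, f r)) = Finset.univ.image fun r => (r, g r) := hfg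
    funext r
    have hmem : (r, f r) ∈ Finset.univ.image fun r => (r, g r) := by
      rw [← hfg']; exact Finset.mem_image_of_mem _ (Finset.mem_univ _)
    rw [Finset.mem_image] at hmem
    obtain ⟨r', _, heq⟩ := hmem
    obtain ⟨h1, h2⟩ := Prod.ext_iff.1 heq
    subst h1
    exact h2.symm
  rw [domCount, key, ← Set.image_univ, Set.ncard_image_of_injective _ hinj,
    Set.ncard_univ, Nat.card_eq_fintype_card]
  simp

lemma domswap (n m : ℕ) (S : Finset (Fin n × Fin m)) (h : IsDomSet n m S) :
    IsDomSet m n (S.image Prod.swap) := by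
  intro v
  rcases h v.swap with hmem | ⟨u, huS, hne, hadj⟩
  · left
    have := Finset.mem_image_of_mem Prod.swap hmem
    simpa using this
  · right
    refine ⟨u.swap, Finset.mem_image_of_mem _ huS, ?_, ?_⟩
    · intro hh
      apply hne
      rw [← hh]
      simp
    · rcases hadj with h1 | h2
      · right; simpa using h1
      · left; simpa using h2

lemma domCount_swap (n m k : ℕ) : domCount n m k = domCount m n k := by
  classical
  have himg : {S : Finset (Fin n × Fin m) | S.card = k ∧ IsDomSet n m S}
      = (fun T : Finset (Fin m × Fin n) => T.image Prod.swap) ''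
        {T | T.card = k ∧ IsDomSet m n T} := by
    ext S
    simp only [Set.mem_setOf_eq, Set.mem_image]
    constructor
    · rintro ⟨hc, hd⟩
      refine ⟨S.image Prod.swap, ⟨?_, domswap n m S hd⟩, ?_⟩
      · rw [Finset.card_image_of_injective _ Prod.swap_injective, hc]
      · rw [Finset.image_image]
        simp [Prod.swap_swap]
    · rintro ⟨T, ⟨hc, hd⟩, rfl⟩
      exact ⟨by rw [Finset.card_image_of_injective _ Prod.swap_injective, hc],
        domswap m n T hd⟩
  rw [domCount, himg,
    Set.ncard_image_of_injective _ (Finset.image_injective Prod.swap_injective), domCount]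

/-- For `n ≠ m`, the number of minimum dominating sets of the rook graph is
`max n m ^ min n m`. -/
theorem rook_min_dom_count_ne (n m : ℕ) (hn : 1 ≤ n) (hm : 1 ≤ m) (hnm : n ≠ m) :
    domCount n m (min n m) = max n m ^ min n m := by
  rcases lt_or_gt_of_ne hnm with h | h
  · rw [min_eq_left h.le, max_eq_right h.le]
    exact dom_lt n m h
  · rw [min_eq_right h.le, max_eq_left h.le]
    rw [domCount_swap]
    exact dom_lt m n h
end

section
/- For every integer n ≥ 1, the number of dominating sets of the n×n rook graph R_{n,n} of cardinality n equals 2·n^n − n!. -/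
open Finset Polynomial

lemma isDomSet_iff (n : ℕ) (S : Finset (Fin n × Fin n)) :
    IsDomSet n n S ↔ (∀ r : Fin n, ∃ c, (r, c) ∈ S) ∨ (∀ c : Fin n, ∃ r, (r, c) ∈ S) := by
  constructor
  · intro h
    by_contra hc
    push_neg at hc
    obtain ⟨⟨r, hr⟩, ⟨c, hcc⟩⟩ := hc
    rcases h (r, c) with h1 | ⟨⟨a, b⟩, hu, hadj⟩
    · exact hr c h1
    · rcases hadj.2 with h2 | h2
      · simp only [] at h2; subst h2; exact hr b hu
      · simp only [] at h2; subst h2; exact hcc a hu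
  · intro h v
    rcases h with h | h
    · obtain ⟨c, hc⟩ := h v.1
      by_cases hv : (v.1, c) = v
      · left; rwa [hv] at hc
      · right; exact ⟨(v.1, c), hc, hv, Or.inl rfl⟩
    · obtain ⟨r, hr⟩ := h v.2
      by_cases hv : (r, v.2) = v
      · left; rwa [hv] at hr
      · right; exact ⟨(r, v.2), hr, hv, Or.inr rfl⟩

def rowSet (n : ℕ) (f : Fin n → Fin n) : Finset (Fin n × Fin n) :=
  Finset.univ.image (fun r => (r, f r))

def colSet (n : ℕ) (f : Fin n → Fin n) : Finset (Fin n × Fin n) :=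
  Finset.univ.image (fun c => (f c, c))

lemma mem_rowSet {n : ℕ} {f : Fin n → Fin n} {v : Fin n × Fin n} :
    v ∈ rowSet n f ↔ f v.1 = v.2 := by
  simp only [rowSet, Finset.mem_image, Finset.mem_univ, true_and]
  constructor
  · rintro ⟨r, rfl⟩; rfl
  · intro h; exact ⟨v.1, by rw [h]⟩

lemma mem_colSet {n : ℕ} {f : Fin n → Fin n} {v : Fin n × Fin n} :
    v ∈ colSet n f ↔ f v.2 = v.1 := by
  simp only [colSet, Finset.mem_image, Finset.mem_univ, true_and]
  constructor
  · rintro ⟨r, rfl⟩; rfl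
  · intro h; exact ⟨v.2, by rw [h]⟩

lemma card_rowSet {n : ℕ} (f : Fin n → Fin n) : (rowSet n f).card = n := by
  rw [rowSet, Finset.card_image_of_injective _ (fun a b h => congrArg Prod.fst h),
    Finset.card_univ, Fintype.card_fin]

lemma card_colSet {n : ℕ} (f : Fin n → Fin n) : (colSet n f).card = n := by
  rw [colSet, Finset.card_image_of_injective _ (fun a b h => congrArg Prod.snd h),
    Finset.card_univ, Fintype.card_fin]

lemma rowSet_injective (n : ℕ) : Function.Injective (rowSet n) := by
  intro f g h
  funext r
  have : (r, f r) ∈ rowSet n g := by rw [← h]; exact mem_rowSet.2 rfl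
  exact (mem_rowSet.1 this).symm

lemma colSet_injective (n : ℕ) : Function.Injective (colSet n) := by
  intro f g h
  funext c
  have : (f c, c) ∈ colSet n g := by rw [← h]; exact mem_colSet.2 rfl
  exact (mem_colSet.1 this).symm

lemma setA_eq (n : ℕ) :
    {S : Finset (Fin n × Fin n) | S.card = n ∧ ∀ r : Fin n, ∃ c, (r, c) ∈ S}
      = Set.range (rowSet n) := by
  ext S
  constructor
  · rintro ⟨hcard, hrow⟩
    choose f hf using hrow
    refine ⟨f, ?_⟩
    apply Finset.eq_of_subset_of_card_le
    · intro v hv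
      obtain ⟨r, -, rfl⟩ := Finset.mem_image.1 hv
      exact hf r
    · rw [hcard, card_rowSet]
  · rintro ⟨f, rfl⟩
    exact ⟨card_rowSet f, fun r => ⟨f r, mem_rowSet.2 rfl⟩⟩

lemma setB_eq (n : ℕ) :
    {S : Finset (Fin n × Fin n) | S.card = n ∧ ∀ c : Fin n, ∃ r, (r, c) ∈ S}
      = Set.range (colSet n) := by
  ext S
  constructor
  · rintro ⟨hcard, hcol⟩
    choose f hf using hcol
    refine ⟨f, ?_⟩
    apply Finset.eq_of_subset_of_card_le
    · intro v hv
      obtain ⟨c, -, rfl⟩ := Finset.mem_image.1 hv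
      exact hf c
    · rw [hcard, card_colSet]
  · rintro ⟨f, rfl⟩
    exact ⟨card_colSet f, fun c => ⟨f c, mem_colSet.2 rfl⟩⟩

lemma setAB_eq (n : ℕ) :
    {S : Finset (Fin n × Fin n) | S.card = n ∧ ∀ r : Fin n, ∃ c, (r, c) ∈ S}
      ∩ {S : Finset (Fin n × Fin n) | S.card = n ∧ ∀ c : Fin n, ∃ r, (r, c) ∈ S}
      = rowSet n '' {f | Function.Surjective f} := by
  ext S
  constructor
  · rintro ⟨hA, hB⟩
    rw [setA_eq] at hA
    obtain ⟨f, rfl⟩ := hA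
    refine ⟨f, fun c => ?_, rfl⟩
    obtain ⟨r, hr⟩ := hB.2 c
    exact ⟨r, mem_rowSet.1 hr⟩
  · rintro ⟨f, hf, rfl⟩
    refine ⟨⟨card_rowSet f, fun r => ⟨f r, mem_rowSet.2 rfl⟩⟩,
      ⟨card_rowSet f, fun c => ?_⟩⟩
    obtain ⟨r, rfl⟩ := hf c
    exact ⟨r, mem_rowSet.2 rfl⟩

lemma ncard_range_inj {α β : Type*} [Fintype α] {g : α → β} (hg : Function.Injective g) :
    (Set.range g).ncard = Fintype.card α := by
  rw [← Set.image_univ, Set.ncard_image_of_injective _ hg, Set.ncard_univ,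
    Nat.card_eq_fintype_card]

lemma key (n : ℕ) : domCount n n n + n.factorial = n ^ n + n ^ n := by
  classical
  have hA := setA_eq n
  have hB := setB_eq n
  have hdom : {S : Finset (Fin n × Fin n) | S.card = n ∧ IsDomSet n n S}
      = Set.range (rowSet n) ∪ Set.range (colSet n) := by
    rw [← hA, ← hB]
    ext S
    simp only [Set.mem_setOf_eq, Set.mem_union, isDomSet_iff, and_or_left]
  have h1 : (Set.range (rowSet n)).ncard = n ^ n := by
    rw [ncard_range_inj (rowSet_injective n), Fintype.card_fun, Fintype.card_fin]
  have h2 : (Set.range (colSet n)).ncard = n ^ n := by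
    rw [ncard_range_inj (colSet_injective n), Fintype.card_fun, Fintype.card_fin]
  have hinter : (Set.range (rowSet n) ∩ Set.range (colSet n)).ncard = n.factorial := by
    rw [← hA, ← hB, setAB_eq]
    have hsurj : {f : Fin n → Fin n | Function.Surjective f}
        = Set.range (fun e : Equiv.Perm (Fin n) => ⇑e) := by
      ext f
      constructor
      · intro hf
        have hbij : Function.Bijective f := Finite.surjective_iff_bijective.1 hf
        exact ⟨Equiv.ofBijective f hbij, rfl⟩
      · rintro ⟨e, rfl⟩
        exact e.surjective
    rw [Set.ncard_image_of_injective _ (rowSet_injective n), hsurj,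
      ncard_range_inj (fun a b h => Equiv.coe_fn_injective h)]
    rw [Fintype.card_perm, Fintype.card_fin]
  have hie := Set.ncard_union_add_ncard_inter (Set.range (rowSet n)) (Set.range (colSet n))
    (Set.toFinite _) (Set.toFinite _)
  rw [domCount, hdom, hinter] at *
  omega

/-- The number of dominating sets of cardinality `n` of the `n × n` rook graph
is `2 * n ^ n - n!`. -/
theorem rook_min_dom_count_square (n : ℕ) (hn : 1 ≤ n) :
    (domCount n n n : ℤ) = 2 * (n : ℤ) ^ n - (n.factorial : ℤ) := by
  have h := key n
  have := congrArg (Nat.cast : ℕ → ℤ) h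
  push_cast at this
  linarith
end

section
/- For all integers n, m ≥ 1 and every integer k with nm − n − m − min(n,m) + 2 < k ≤ nm, the number of dominating sets of cardinality k of the n×m rook graph satisfies d_{n,m}(k) = C(nm, k) − n·m·C((n−1)(m−1), k), where the identity is read in the integers and C(a,b) = 0 whenever b > a. -/
open Finset Polynomial

lemma not_isDomSet_iff (n m : ℕ) (S : Finset (Fin n × Fin m)) :
    ¬ IsDomSet n m S ↔ ∃ a : Fin n, ∃ b : Fin m,
      (∀ c, ((a, c) : Fin n × Fin m) ∉ S) ∧ (∀ r, ((r, b) : Fin n × Fin m) ∉ S) := by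
  unfold IsDomSet
  push_neg
  constructor
  · rintro ⟨⟨a, b⟩, hv, hadj⟩
    refine ⟨a, b, fun c hc => ?_, fun r hr => ?_⟩
    · by_cases h : ((a, c) : Fin n × Fin m) = (a, b)
      · exact hv (h ▸ hc)
      · exact hadj _ hc ⟨h, Or.inl rfl⟩
    · by_cases h : ((r, b) : Fin n × Fin m) = (a, b)
      · exact hv (h ▸ hr)
      · exact hadj _ hr ⟨h, Or.inr rfl⟩
  · rintro ⟨a, b, hrow, hcol⟩
    refine ⟨(a, b), hrow b, ?_⟩
    rintro ⟨r, c⟩ hu ⟨hne, h | h⟩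
    · exact hrow c ((show r = a from h) ▸ hu)
    · exact hcol r ((show c = b from h) ▸ hu)


/-- Corollary 3: high-density formula for the dominating-set counts. -/
theorem rook_dom_count_high_density (n m k : ℕ) (hn : 1 ≤ n) (hm : 1 ≤ m)
    (hk1 : (n : ℤ) * m - n - m - min n m + 2 < (k : ℤ)) (hk2 : k ≤ n * m) :
    (domCount n m k : ℤ) =
      ((n * m).choose k : ℤ) - (n : ℤ) * m * (((n - 1) * (m - 1)).choose k : ℤ) := by
  classical
  have hminm : ((min n m : ℕ) : ℤ) ≤ (m : ℤ) := by exact_mod_cast min_le_right n m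
  have hminn : ((min n m : ℕ) : ℤ) ≤ (n : ℤ) := by exact_mod_cast min_le_left n m
  set G : Fin n × Fin m → Finset (Fin n × Fin m) :=
    fun ab => (Finset.univ.erase ab.1) ×ˢ (Finset.univ.erase ab.2) with hG
  have hGcard : ∀ ab, (G ab).card = (n - 1) * (m - 1) := by
    intro ab
    simp [hG, Finset.card_erase_of_mem]
  have hsub : ∀ (S : Finset (Fin n × Fin m)) (ab : Fin n × Fin m), S ⊆ G ab ↔
      (∀ c, ((ab.1, c) : Fin n × Fin m) ∉ S) ∧ (∀ r, ((r, ab.2) : Fin n × Fin m) ∉ S) := by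
    intro S ab
    constructor
    · intro h
      refine ⟨fun c hc => ?_, fun r hr => ?_⟩
      · have := h hc
        simp [hG] at this
      · have := h hr
        simp [hG] at this
    · rintro ⟨h1, h2⟩ v hv
      simp only [hG, Finset.mem_product, Finset.mem_erase, Finset.mem_univ, and_true]
      refine ⟨fun he => ?_, fun he => ?_⟩
      · exact h1 v.2 (by rwa [← he])
      · exact h2 v.1 (by rwa [← he])
  -- key cardinality bounds
  have hb1 : 2 ≤ n → ¬ (k ≤ (n - 1 - 1) * (m - 1)) := by
    intro h2 hle
    have hc : (((n - 1 - 1) * (m - 1) : ℕ) : ℤ) = ((n : ℤ) - 2) * ((m : ℤ) - 1) := by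
      have e1 : n - 1 - 1 = n - 2 := by omega
      rw [e1, Nat.cast_mul, Nat.cast_sub h2, Nat.cast_sub hm]
      norm_num
    have hle' : (k : ℤ) ≤ ((n : ℤ) - 2) * ((m : ℤ) - 1) := by
      rw [← hc]; exact_mod_cast hle
    have hexp : ((n : ℤ) - 2) * ((m : ℤ) - 1) = (n : ℤ) * m - n - 2 * m + 2 := by ring
    linarith
  have hb2 : 2 ≤ m → ¬ (k ≤ (n - 1) * (m - 1 - 1)) := by
    intro h2 hle
    have hc : (((n - 1) * (m - 1 - 1) : ℕ) : ℤ) = ((n : ℤ) - 1) * ((m : ℤ) - 2) := by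
      have e1 : m - 1 - 1 = m - 2 := by omega
      rw [e1, Nat.cast_mul, Nat.cast_sub hn, Nat.cast_sub h2]
      norm_num
    have hle' : (k : ℤ) ≤ ((n : ℤ) - 1) * ((m : ℤ) - 2) := by
      rw [← hc]; exact_mod_cast hle
    have hexp : ((n : ℤ) - 1) * ((m : ℤ) - 2) = (n : ℤ) * m - 2 * n - m + 2 := by ring
    linarith
  -- disjointness of the families
  have hdisj : ∀ ab ∈ (Finset.univ : Finset (Fin n × Fin m)), ∀ ab' ∈ (Finset.univ : Finset (Fin n × Fin m)),
      ab ≠ ab' → Disjoint (Finset.powersetCard k (G ab)) (Finset.powersetCard k (G ab')) := by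
    intro ab _ ab' _ hne
    rw [Finset.disjoint_left]
    intro S hS hS'
    rw [Finset.mem_powersetCard] at hS hS'
    obtain ⟨hS1, hSk⟩ := hS
    obtain ⟨hS1', _⟩ := hS'
    have h1 := (hsub S ab).1 hS1
    have h1' := (hsub S ab').1 hS1'
    have hcases : ab.1 ≠ ab'.1 ∨ ab.2 ≠ ab'.2 := by
      by_contra hcon
      push_neg at hcon
      exact hne (Prod.ext hcon.1 hcon.2)
    rcases hcases with hca | hca
    · -- S ⊆ (erase² ) ×ˢ (erase)
      have hss : S ⊆ ((Finset.univ.erase ab.1).erase ab'.1) ×ˢ (Finset.univ.erase ab.2) := by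
        intro v hv
        have hA := (hsub S ab).1 hS1
        have hB := (hsub S ab').1 hS1'
        simp only [Finset.mem_product, Finset.mem_erase, Finset.mem_univ, and_true]
        refine ⟨⟨fun he => hB.1 v.2 (by rwa [← he]), fun he => hA.1 v.2 (by rwa [← he])⟩,
          fun he => hA.2 v.1 (by rwa [← he])⟩
      have hcard : (((Finset.univ.erase ab.1).erase ab'.1) ×ˢ (Finset.univ.erase ab.2)).card
          = (n - 1 - 1) * (m - 1) := by
        rw [Finset.card_product, Finset.card_erase_of_mem (by simp [hca.symm]),
          Finset.card_erase_of_mem (Finset.mem_univ _), Finset.card_erase_of_mem (Finset.mem_univ _)]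
        simp
      have hn2 : 2 ≤ n := by
        have : ab.1.val ≠ ab'.1.val := fun h => hca (Fin.ext h)
        have := ab.1.isLt
        have := ab'.1.isLt
        omega
      exact hb1 hn2 (by rw [← hSk, ← hcard]; exact Finset.card_le_card hss)
    · have hss : S ⊆ (Finset.univ.erase ab.1) ×ˢ ((Finset.univ.erase ab.2).erase ab'.2) := by
        intro v hv
        have hA := (hsub S ab).1 hS1
        have hB := (hsub S ab').1 hS1'
        simp only [Finset.mem_product, Finset.mem_erase, Finset.mem_univ, and_true]
        refine ⟨fun he => hA.1 v.2 (by rwa [← he]),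
          ⟨fun he => hB.2 v.1 (by rwa [← he]), fun he => hA.2 v.1 (by rwa [← he])⟩⟩
      have hcard : ((Finset.univ.erase ab.1) ×ˢ ((Finset.univ.erase ab.2).erase ab'.2)).card
          = (n - 1) * (m - 1 - 1) := by
        rw [Finset.card_product, Finset.card_erase_of_mem (Finset.mem_univ _),
          Finset.card_erase_of_mem (by simp [hca.symm]), Finset.card_erase_of_mem (Finset.mem_univ _)]
        simp
      have hm2 : 2 ≤ m := by
        have : ab.2.val ≠ ab'.2.val := fun h => hca (Fin.ext h)
        have := ab.2.isLt
        have := ab'.2.isLt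
        omega
      exact hb2 hm2 (by rw [← hSk, ← hcard]; exact Finset.card_le_card hss)
  set U : Finset (Finset (Fin n × Fin m)) := Finset.powersetCard k Finset.univ with hU
  set D : Finset (Finset (Fin n × Fin m)) := U.filter (fun S => IsDomSet n m S) with hD
  set F : Finset (Finset (Fin n × Fin m)) :=
    Finset.univ.biUnion (fun ab : Fin n × Fin m => Finset.powersetCard k (G ab)) with hF
  have hUcard : U.card = (n * m).choose k := by
    rw [hU, Finset.card_powersetCard]
    simp
  have hFeq : F = U.filter (fun S => ¬ IsDomSet n m S) := by
    ext S
    simp only [hF, hU, Finset.mem_biUnion, Finset.mem_filter, Finset.mem_powersetCard,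
      Finset.mem_univ, true_and, Finset.subset_univ, not_isDomSet_iff]
    constructor
    · rintro ⟨ab, hsub', hk⟩
      obtain ⟨h1, h2⟩ := (hsub S ab).1 hsub'
      exact ⟨hk, ab.1, ab.2, h1, h2⟩
    · rintro ⟨hk, a, b, h1, h2⟩
      exact ⟨(a, b), (hsub S (a, b)).2 ⟨h1, h2⟩, hk⟩
  have hFcard : F.card = n * m * ((n - 1) * (m - 1)).choose k := by
    rw [hF, Finset.card_biUnion hdisj]
    have : ∀ ab : Fin n × Fin m, (Finset.powersetCard k (G ab)).card = ((n - 1) * (m - 1)).choose k := by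
      intro ab
      rw [Finset.card_powersetCard, hGcard]
    rw [Finset.sum_congr rfl (fun ab _ => this ab), Finset.sum_const, Finset.card_univ]
    simp [mul_comm]
  have hsum : D.card + F.card = (n * m).choose k := by
    rw [hFeq, hD, ← hUcard]
    exact Finset.card_filter_add_card_filter_not _
  have hdomD : domCount n m k = D.card := by
    have hset : {S : Finset (Fin n × Fin m) | S.card = k ∧ IsDomSet n m S} = ↑D := by
      ext S
      simp [hD, hU, Finset.mem_powersetCard, and_comm]
    rw [domCount, hset, Set.ncard_coe_finset]
  rw [hdomD]
  have := congrArg (fun x : ℕ => (x : ℤ)) hsum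
  push_cast [hFcard] at this ⊢
  linarith
end

section
/- For all integers n, m ≥ 0, the polynomial identity Σ_{k=0}^{nm} E_{n,m}(k) x^k = Σ_{k=0}^{m} (−1)^{m−k} C(m,k) ((1+x)^k − 1)^n holds in the polynomial ring ℤ[x]. -/
open Finset Polynomial

lemma neg_one_pow_sub' {R : Type*} [CommRing R] {b c : ℕ} (h : b ≤ c) :
    (-1 : R) ^ (c - b) = (-1) ^ c * (-1) ^ b := by
  have h1 : (-1 : R) ^ (c - b) * (-1) ^ b = (-1) ^ c := by
    rw [← pow_add, Nat.sub_add_cancel h]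
  have h2 : (-1 : R) ^ b * (-1) ^ b = 1 := by
    rw [← pow_add, ← two_mul, pow_mul]; norm_num
  calc (-1 : R) ^ (c - b) = (-1) ^ (c - b) * ((-1) ^ b * (-1) ^ b) := by rw [h2, mul_one]
    _ = ((-1) ^ (c - b) * (-1) ^ b) * (-1) ^ b := by ring
    _ = (-1) ^ c * (-1) ^ b := by rw [h1]

lemma sum_powerset_neg_one_pow_card' {R : Type*} [CommRing R] {β : Type*} [DecidableEq β]
    (s : Finset β) : ∑ B ∈ s.powerset, (-1 : R) ^ B.card = if s = ∅ then 1 else 0 := by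
  have h := Finset.sum_powerset_neg_one_pow_card (x := s)
  have : ((∑ B ∈ s.powerset, (-1 : ℤ) ^ B.card : ℤ) : R)
      = ∑ B ∈ s.powerset, (-1 : R) ^ B.card := by push_cast; rfl
  rw [← this, h]
  split_ifs <;> simp

lemma sum_powerset_X {β : Type*} [DecidableEq β] (s : Finset β) :
    ∑ t ∈ s.powerset, (X : Polynomial ℤ) ^ t.card = (1 + X) ^ s.card := by
  have := Finset.prod_add (fun _ : β => (X : Polynomial ℤ)) (fun _ => 1) s
  simp only [Finset.prod_const, Finset.prod_const_one, one_pow, mul_one] at this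
  rw [add_comm 1 (X : Polynomial ℤ), ← this]

lemma aux_ie {β : Type*} [Fintype β] [DecidableEq β] (a : Finset β) :
    ∑ A ∈ (univ : Finset β).powerset,
      (if a ⊆ A then ((-1 : Polynomial ℤ)) ^ (Fintype.card β - A.card) else 0)
      = if a = univ then 1 else 0 := by
  rw [← Finset.sum_filter]
  have key : ∑ A ∈ (univ : Finset β).powerset.filter (fun A => a ⊆ A),
      ((-1 : Polynomial ℤ)) ^ (Fintype.card β - A.card)
      = ∑ B ∈ (univ \ a).powerset, ((-1 : Polynomial ℤ)) ^ ((univ \ a).card - B.card) := by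
    apply Finset.sum_bij' (fun A _ => A \ a) (fun B _ => B ∪ a)
    · intro A hA
      simp only [mem_powerset] at *
      intro x hx; simp [Finset.mem_sdiff] at hx ⊢; exact hx.2
    · intro B hB
      simp only [mem_filter, mem_powerset] at *
      exact ⟨subset_univ _, subset_union_right⟩
    · intro A hA
      simp only [mem_filter, mem_powerset] at hA
      rw [Finset.sdiff_union_self_eq_union, Finset.union_eq_left.mpr hA.2]
    · intro B hB
      simp only [mem_powerset] at hB
      rw [Finset.union_sdiff_right]
      exact Finset.sdiff_eq_self_of_disjoint
        (Finset.disjoint_left.mpr (fun x hx => (Finset.mem_sdiff.mp (hB hx)).2))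
    · intro A hA
      simp only [mem_filter, mem_powerset] at hA
      congr 1
      have h1 : (A \ a).card = A.card - a.card := Finset.card_sdiff_of_subset hA.2
      have h2 : (univ \ a).card = Fintype.card β - a.card := by
        rw [Finset.card_sdiff_of_subset (subset_univ _), Finset.card_univ]
      have h3 : a.card ≤ A.card := Finset.card_le_card hA.2
      have h4 : A.card ≤ Fintype.card β := by
        rw [← Finset.card_univ]; exact Finset.card_le_card hA.1
      omega
  rw [key]
  have : ∀ B ∈ (univ \ a).powerset, ((-1 : Polynomial ℤ)) ^ ((univ \ a).card - B.card)
      = (-1) ^ (univ \ a).card * (-1) ^ B.card := by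
    intro B hB
    exact neg_one_pow_sub' (Finset.card_le_card (mem_powerset.mp hB))
  rw [Finset.sum_congr rfl this, ← Finset.mul_sum, sum_powerset_neg_one_pow_card']
  by_cases h : a = univ
  · simp [h]
  · have h' : (univ \ a : Finset β) ≠ ∅ := by
      intro hc
      exact h (Finset.eq_univ_of_forall (fun x => by
        by_contra hx
        exact absurd hc (Finset.ne_empty_of_mem (Finset.mem_sdiff.mpr ⟨mem_univ x, hx⟩))))
    simp [h, h']

noncomputable def covers (n m : ℕ) : Finset (Finset (Fin n × Fin m)) :=
  @Finset.filter _
    (fun T => (∀ r : Fin n, ∃ c : Fin m, (r, c) ∈ T) ∧ (∀ c : Fin m, ∃ r : Fin n, (r, c) ∈ T))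
    (Classical.decPred _) Finset.univ

lemma mem_covers {n m : ℕ} {T : Finset (Fin n × Fin m)} :
    T ∈ covers n m ↔
      ((∀ r : Fin n, ∃ c : Fin m, (r, c) ∈ T) ∧ (∀ c : Fin m, ∃ r : Fin n, (r, c) ∈ T)) := by
  simp [covers]

lemma stepA (n m : ℕ) :
    ∑ k ∈ Finset.range (n * m + 1), Polynomial.C (ECount n m k : ℤ) * Polynomial.X ^ k
      = ∑ T ∈ covers n m, (X : Polynomial ℤ) ^ T.card := by
  classical
  rw [← Finset.sum_fiberwise_of_maps_to (g := fun T : Finset (Fin n × Fin m) => T.card)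
      (t := Finset.range (n * m + 1))
      (fun T _ => by
        have h1 : T.card ≤ Fintype.card (Fin n × Fin m) := Finset.card_le_univ T
        simp only [Fintype.card_prod, Fintype.card_fin] at h1
        exact Finset.mem_range.mpr (Nat.lt_succ_of_le h1))
      (fun T => (X : Polynomial ℤ) ^ T.card)]
  apply Finset.sum_congr rfl
  intro k _
  have hcount : ECount n m k = ((covers n m).filter (fun T => T.card = k)).card := by
    rw [ECount, ← Set.ncard_coe_finset]
    congr 1
    ext T
    simp [covers, Finset.filter_filter, and_comm, and_assoc]
  rw [Finset.sum_congr rfl (fun T hT => by rw [(Finset.mem_filter.mp hT).2]),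
    Finset.sum_const, nsmul_eq_mul, hcount, map_natCast]

lemma subset_prod_iff {n m : ℕ} (T : Finset (Fin n × Fin m)) (A : Finset (Fin n))
    (B : Finset (Fin m)) :
    T ⊆ A ×ˢ B ↔ T.image Prod.fst ⊆ A ∧ T.image Prod.snd ⊆ B := by
  constructor
  · intro h
    constructor <;> intro x hx <;> obtain ⟨p, hp, rfl⟩ := Finset.mem_image.mp hx
    exacts [(Finset.mem_product.mp (h hp)).1, (Finset.mem_product.mp (h hp)).2]
  · rintro ⟨h1, h2⟩ p hp
    exact Finset.mem_product.mpr
      ⟨h1 (Finset.mem_image_of_mem _ hp), h2 (Finset.mem_image_of_mem _ hp)⟩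

lemma image_fst_eq_univ_iff {n m : ℕ} (T : Finset (Fin n × Fin m)) :
    T.image Prod.fst = univ ↔ ∀ r : Fin n, ∃ c : Fin m, (r, c) ∈ T := by
  simp only [Finset.eq_univ_iff_forall, Finset.mem_image, Prod.exists]
  constructor <;> intro h x
  · obtain ⟨a, b, hab, rfl⟩ := h x; exact ⟨b, hab⟩
  · obtain ⟨c, hc⟩ := h x; exact ⟨x, c, hc, rfl⟩

lemma image_snd_eq_univ_iff {n m : ℕ} (T : Finset (Fin n × Fin m)) :
    T.image Prod.snd = univ ↔ ∀ c : Fin m, ∃ r : Fin n, (r, c) ∈ T := by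
  simp only [Finset.eq_univ_iff_forall, Finset.mem_image, Prod.exists]
  constructor <;> intro h x
  · obtain ⟨a, b, hab, h'⟩ := h x; subst h'; exact ⟨a, hab⟩
  · obtain ⟨c, hc⟩ := h x; exact ⟨c, x, hc, rfl⟩

lemma stepB (n m : ℕ) :
    ∑ A ∈ (univ : Finset (Fin n)).powerset, ∑ B ∈ (univ : Finset (Fin m)).powerset,
        (-1 : Polynomial ℤ) ^ (n - A.card) * (-1) ^ (m - B.card) *
          ∑ T ∈ (A ×ˢ B).powerset, (X : Polynomial ℤ) ^ T.card
      = ∑ T ∈ covers n m, (X : Polynomial ℤ) ^ T.card := by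
  classical
  have h1 : ∀ (A : Finset (Fin n)) (B : Finset (Fin m)),
      (-1 : Polynomial ℤ) ^ (n - A.card) * (-1) ^ (m - B.card) *
          ∑ T ∈ (A ×ˢ B).powerset, (X : Polynomial ℤ) ^ T.card
        = ∑ T ∈ (univ : Finset (Finset (Fin n × Fin m))),
            (if T ⊆ A ×ˢ B then
              (-1 : Polynomial ℤ) ^ (n - A.card) * (-1) ^ (m - B.card) * X ^ T.card else 0) := by
    intro A B
    have hpow : (A ×ˢ B).powerset
        = (univ : Finset (Finset (Fin n × Fin m))).filter (fun T => T ⊆ A ×ˢ B) := by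
      ext t; simp
    rw [hpow, Finset.sum_filter, Finset.mul_sum]
    exact Finset.sum_congr rfl (fun T _ => by split_ifs <;> simp)
  simp only [h1]
  have h2 : ∀ A : Finset (Fin n),
      (∑ B ∈ (univ : Finset (Fin m)).powerset,
          ∑ T ∈ (univ : Finset (Finset (Fin n × Fin m))),
            (if T ⊆ A ×ˢ B then
              (-1 : Polynomial ℤ) ^ (n - A.card) * (-1) ^ (m - B.card) * X ^ T.card else 0))
        = ∑ T ∈ (univ : Finset (Finset (Fin n × Fin m))),
            ∑ B ∈ (univ : Finset (Fin m)).powerset,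
            (if T ⊆ A ×ˢ B then
              (-1 : Polynomial ℤ) ^ (n - A.card) * (-1) ^ (m - B.card) * X ^ T.card else 0) :=
    fun A => Finset.sum_comm
  simp only [h2]
  rw [Finset.sum_comm]
  have h3 : ∀ T : Finset (Fin n × Fin m),
      (∑ A ∈ (univ : Finset (Fin n)).powerset, ∑ B ∈ (univ : Finset (Fin m)).powerset,
        (if T ⊆ A ×ˢ B then
          (-1 : Polynomial ℤ) ^ (n - A.card) * (-1) ^ (m - B.card) * X ^ T.card else 0))
      = (if ((∀ r : Fin n, ∃ c : Fin m, (r, c) ∈ T) ∧ (∀ c : Fin m, ∃ r : Fin n, (r, c) ∈ T))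
          then (X : Polynomial ℤ) ^ T.card else 0) := by
    intro T
    have hfac : ∀ (A : Finset (Fin n)) (B : Finset (Fin m)),
        (if T ⊆ A ×ˢ B then
          (-1 : Polynomial ℤ) ^ (n - A.card) * (-1) ^ (m - B.card) * X ^ T.card else 0)
        = (if T.image Prod.fst ⊆ A then
            (-1 : Polynomial ℤ) ^ (Fintype.card (Fin n) - A.card) else 0)
          * ((if T.image Prod.snd ⊆ B then
              (-1 : Polynomial ℤ) ^ (Fintype.card (Fin m) - B.card) else 0) * X ^ T.card) := by
      intro A B
      simp only [subset_prod_iff]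
      by_cases hA : T.image Prod.fst ⊆ A <;> by_cases hB : T.image Prod.snd ⊆ B <;>
        simp [hA, hB, Fintype.card_fin, mul_assoc]
    simp only [hfac]
    rw [← Finset.sum_mul_sum, ← Finset.sum_mul, aux_ie, aux_ie]
    simp only [image_fst_eq_univ_iff, image_snd_eq_univ_iff]
    by_cases h1' : (∀ r : Fin n, ∃ c : Fin m, (r, c) ∈ T) <;>
      by_cases h2' : (∀ c : Fin m, ∃ r : Fin n, (r, c) ∈ T) <;> simp [h1', h2']
  simp only [h3]
  rw [covers, Finset.sum_filter]
  exact Finset.sum_congr rfl fun a _ => by split_ifs <;> rfl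

lemma sum_powerset_card_poly {β : Type*} [Fintype β] [DecidableEq β] (F : ℕ → Polynomial ℤ) :
    ∑ A ∈ (univ : Finset β).powerset, F A.card
      = ∑ j ∈ Finset.range (Fintype.card β + 1), ((Fintype.card β).choose j) • F j := by
  rw [Finset.sum_powerset, Finset.card_univ]
  refine Finset.sum_congr rfl fun j hj => ?_
  rw [Finset.sum_congr rfl (fun t ht => by rw [(Finset.mem_powersetCard.mp ht).2]),
    Finset.sum_const, Finset.card_powersetCard, Finset.card_univ]

lemma stepC (n m : ℕ) :
    ∑ A ∈ (univ : Finset (Fin n)).powerset, ∑ B ∈ (univ : Finset (Fin m)).powerset,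
        (-1 : Polynomial ℤ) ^ (n - A.card) * (-1) ^ (m - B.card) *
          ∑ T ∈ (A ×ˢ B).powerset, (X : Polynomial ℤ) ^ T.card
      = ∑ k ∈ Finset.range (m + 1),
          (-1 : Polynomial ℤ) ^ (m - k) * Polynomial.C (m.choose k : ℤ) *
            ((1 + Polynomial.X) ^ k - 1) ^ n := by
  classical
  simp only [sum_powerset_X, Finset.card_product]
  have hInner : ∀ A : Finset (Fin n),
      ∑ B ∈ (univ : Finset (Fin m)).powerset,
        (-1 : Polynomial ℤ) ^ (n - A.card) * (-1) ^ (m - B.card) * (1 + X) ^ (A.card * B.card)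
      = ∑ k ∈ Finset.range (m + 1),
          (m.choose k) •
            ((-1 : Polynomial ℤ) ^ (n - A.card) * (-1) ^ (m - k) * (1 + X) ^ (A.card * k)) := by
    intro A
    have h := sum_powerset_card_poly (β := Fin m)
      (fun k => (-1 : Polynomial ℤ) ^ (n - A.card) * (-1) ^ (m - k) * (1 + X) ^ (A.card * k))
    simpa [Fintype.card_fin] using h
  simp only [hInner]
  have hOuter := sum_powerset_card_poly (β := Fin n)
    (fun j => ∑ k ∈ Finset.range (m + 1),
      (m.choose k) •
        ((-1 : Polynomial ℤ) ^ (n - j) * (-1) ^ (m - k) * (1 + X) ^ (j * k)))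
  simp only [Fintype.card_fin] at hOuter
  rw [hOuter]
  -- expand the RHS using sub_pow and compare termwise
  have hRHS : ∀ k, ((1 + Polynomial.X) ^ k - 1 : Polynomial ℤ) ^ n
      = ∑ j ∈ Finset.range (n + 1),
          (-1 : Polynomial ℤ) ^ (j + n) * ((1 + X) ^ k) ^ j * 1 ^ (n - j) * ((n.choose j : ℕ) : Polynomial ℤ) := by
    intro k
    exact sub_pow _ _ _
  simp only [hRHS]
  simp only [Finset.smul_sum]
  rw [Finset.sum_comm]
  refine Finset.sum_congr rfl fun k hk => ?_
  rw [Finset.mul_sum]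
  refine Finset.sum_congr rfl fun j hj => ?_
  have hj' : j ≤ n := Nat.lt_succ_iff.mp (Finset.mem_range.mp hj)
  have hsign : (-1 : Polynomial ℤ) ^ (j + n) = (-1) ^ (n - j) := by
    rw [neg_one_pow_eq_pow_mod_two, neg_one_pow_eq_pow_mod_two (n := n - j)]
    congr 1
    omega
  simp only [nsmul_eq_mul, map_natCast, one_pow, hsign, ← pow_mul, Nat.mul_comm k j]
  ring

/-- The generating function of `ECount n m`, i.e. the edge cover polynomial of the
complete bipartite graph `K_{n,m}`. -/
theorem ECount_generating_function (n m : ℕ) :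
    ∑ k ∈ Finset.range (n * m + 1), Polynomial.C (ECount n m k : ℤ) * Polynomial.X ^ k =
      ∑ k ∈ Finset.range (m + 1),
        (-1 : Polynomial ℤ) ^ (m - k) * Polynomial.C (m.choose k : ℤ) *
          ((1 + Polynomial.X) ^ k - 1) ^ n := by
  rw [stepA, ← stepB, stepC]
end

section
/- For all integers n, m ≥ 1, the domination polynomial of the n×m rook graph satisfies D_{R_{n,m}}(x) = ((1+x)^n − 1)^m + ((1+x)^m − 1)^n − (−1)^{n+m} Σ_{ℓ=0}^{n} Σ_{k=0}^{m} C(n,ℓ) C(m,k) (−1)^{k+ℓ} (1+x)^{kℓ} as an identity in the polynomial ring ℤ[x]. -/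
open Finset Polynomial

variable {α β : Type*} [Fintype α] [DecidableEq α] [Fintype β] [DecidableEq β]

/-- sum of X^card over a powerset -/
lemma aux_sum_powerset_pow {γ : Type*} [DecidableEq γ] (t : Finset γ) :
    ∑ S ∈ t.powerset, (Polynomial.X : Polynomial ℤ) ^ S.card = (1 + Polynomial.X) ^ t.card := by
  have h := Finset.prod_add (fun _ : γ => (Polynomial.X : Polynomial ℤ)) (fun _ => 1) t
  simp only [Finset.prod_const, Finset.prod_const_one, one_pow, mul_one] at h
  rw [add_comm 1 (Polynomial.X : Polynomial ℤ)]
  exact h.symm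

lemma aux_neg_one_powerset {γ : Type*} [DecidableEq γ] (t : Finset γ) :
    ∑ S ∈ t.powerset, (-1 : Polynomial ℤ) ^ S.card = if t = ∅ then 1 else 0 := by
  have h := Finset.prod_add (fun _ : γ => (-1 : Polynomial ℤ)) (fun _ => 1) t
  simp only [Finset.prod_const, Finset.prod_const_one, one_pow, mul_one, neg_add_cancel,
    Finset.prod_const] at h
  rw [← h, zero_pow_eq]
  split_ifs with h1 h2 h3
  · rfl
  · exact absurd (Finset.card_eq_zero.mp h1) h2
  · exact absurd (h3 ▸ Finset.card_empty) h1
  · rfl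

/-- counting: from coefficient counts to a sum over finsets -/
lemma aux_count_to_sum {V : Type*} [Fintype V] [DecidableEq V] (p : Finset V → Prop)
    [DecidablePred p] (N : ℕ) (hN : Fintype.card V ≤ N) :
    ∑ k ∈ Finset.range (N + 1),
      Polynomial.C ((Set.ncard {S : Finset V | S.card = k ∧ p S}) : ℤ) * Polynomial.X ^ k
      = ∑ S ∈ (Finset.univ : Finset (Finset V)).filter p,
          (Polynomial.X : Polynomial ℤ) ^ S.card := by
  rw [← Finset.sum_fiberwise_of_maps_to (g := Finset.card) (t := Finset.range (N + 1))
    (fun S _ => Finset.mem_range.mpr (Nat.lt_succ_of_le (le_trans (Finset.card_le_univ S) hN)))]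
  refine Finset.sum_congr rfl fun k _ => ?_
  have hset : {S : Finset V | S.card = k ∧ p S} =
      ↑(((Finset.univ : Finset (Finset V)).filter p).filter (fun S => S.card = k)) := by
    ext S; simp [and_comm]
  rw [hset, Set.ncard_coe_finset]
  rw [Finset.sum_congr rfl (fun S hS => by
    rw [(Finset.mem_filter.mp hS).2])]
  rw [Finset.sum_const, nsmul_eq_mul]
  rw [map_natCast Polynomial.C, mul_comm]

lemma aux_card_graph (f : α → Finset β) :
    ((Finset.univ : Finset (α × β)).filter (fun p => p.2 ∈ f p.1)).card
      = ∑ a : α, (f a).card := by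
  rw [Finset.card_eq_sum_card_fiberwise (f := Prod.fst) (t := Finset.univ)
    (fun x _ => Finset.mem_univ _)]
  refine Finset.sum_congr rfl fun a _ => ?_
  rw [Finset.filter_filter]
  refine Finset.card_nbij' (fun p => p.2) (fun b => (a, b)) ?_ ?_ ?_ ?_
  · intro p hp
    simp only [Finset.mem_coe, Finset.mem_filter, Finset.mem_univ, true_and] at hp
    rw [← hp.2]; exact hp.1
  · intro b hb
    simp [Finset.mem_coe.mp hb]
  · intro p hp
    simp only [Finset.mem_coe, Finset.mem_filter, Finset.mem_univ, true_and] at hp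
    rw [← hp.2]
  · intro b _; rfl

lemma aux_rows_gf :
    ∑ S ∈ (Finset.univ : Finset (Finset (α × β))).filter
        (fun S => ∀ a : α, ∃ b : β, (a, b) ∈ S),
      (Polynomial.X : Polynomial ℤ) ^ S.card
      = ((1 + Polynomial.X) ^ Fintype.card β - 1) ^ Fintype.card α := by
  have hne : ((1 + Polynomial.X : Polynomial ℤ) ^ Fintype.card β - 1)
      = ∑ T ∈ (Finset.univ : Finset (Finset β)).filter (fun T => T.Nonempty),
          (Polynomial.X : Polynomial ℤ) ^ T.card := by
    have h1 : ((1 + Polynomial.X : Polynomial ℤ) ^ Fintype.card β)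
        = ∑ T ∈ (Finset.univ : Finset (Finset β)), (Polynomial.X : Polynomial ℤ) ^ T.card := by
      rw [← Finset.powerset_univ, aux_sum_powerset_pow, Finset.card_univ]
    have h2 := Finset.sum_filter_add_sum_filter_not (Finset.univ : Finset (Finset β))
      (fun T => T.Nonempty) (fun T => (Polynomial.X : Polynomial ℤ) ^ T.card)
    have h3 : (Finset.univ : Finset (Finset β)).filter (fun T => ¬ T.Nonempty) = {∅} := by
      ext T; simp [Finset.not_nonempty_iff_eq_empty]
    rw [h3, Finset.sum_singleton, Finset.card_empty, pow_zero] at h2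
    rw [h1, ← h2]; ring
  rw [hne, ← Finset.card_univ (α := α), ← Finset.prod_const, Finset.prod_univ_sum]
  refine Finset.sum_nbij' (fun S a => (Finset.univ : Finset β).filter (fun b => (a, b) ∈ S))
    (fun f => (Finset.univ : Finset (α × β)).filter (fun p => p.2 ∈ f p.1)) ?_ ?_ ?_ ?_ ?_
  · intro S hS
    simp only [Finset.mem_filter, Finset.mem_univ, true_and] at hS
    simp only [Fintype.mem_piFinset, Finset.mem_filter, Finset.mem_univ, true_and]
    intro a
    obtain ⟨b, hb⟩ := hS a
    exact ⟨b, by simp [hb]⟩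
  · intro f hf
    simp only [Fintype.mem_piFinset, Finset.mem_filter, Finset.mem_univ, true_and] at hf ⊢
    intro a
    obtain ⟨b, hb⟩ := hf a
    exact ⟨b, by simp [hb]⟩
  · intro S _
    ext p
    simp
  · intro f _
    funext a
    ext b
    simp
  · intro S _
    rw [Finset.prod_pow_eq_pow_sum, ← aux_card_graph]
    congr 2
    ext p
    simp

lemma aux_cols_gf :
    ∑ S ∈ (Finset.univ : Finset (Finset (α × β))).filter
        (fun S => ∀ b : β, ∃ a : α, (a, b) ∈ S),
      (Polynomial.X : Polynomial ℤ) ^ S.card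
      = ((1 + Polynomial.X) ^ Fintype.card α - 1) ^ Fintype.card β := by
  rw [← aux_rows_gf (α := β) (β := α)]
  refine Finset.sum_nbij' (fun S => S.image Prod.swap) (fun S => S.image Prod.swap)
    ?_ ?_ ?_ ?_ ?_
  · intro S hS
    simp only [Finset.mem_filter, Finset.mem_univ, true_and] at hS ⊢
    intro b
    obtain ⟨a, ha⟩ := hS b
    exact ⟨a, Finset.mem_image_of_mem _ ha⟩
  · intro S hS
    simp only [Finset.mem_filter, Finset.mem_univ, true_and] at hS ⊢
    intro b
    obtain ⟨a, ha⟩ := hS b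
    exact ⟨a, Finset.mem_image_of_mem _ ha⟩
  · intro S _
    simp [Finset.image_image, Function.comp_def]
  · intro S _
    simp [Finset.image_image, Function.comp_def]
  · intro S _
    rw [Finset.card_image_of_injective _ Prod.swap_injective]

lemma aux_if_mul (P Q : Prop) [Decidable P] [Decidable Q] (u v : Polynomial ℤ) :
    (if P ∧ Q then u * v else 0) = (if P then u else 0) * (if Q then v else 0) := by
  by_cases hP : P <;> by_cases hQ : Q <;> simp [hP, hQ]

lemma aux_subset_iff (A : Finset α) (B : Finset β) (S : Finset (α × β)) :
    S ⊆ Aᶜ ×ˢ Bᶜ ↔ A ⊆ (S.image Prod.fst)ᶜ ∧ B ⊆ (S.image Prod.snd)ᶜ := by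
  constructor
  · intro h
    refine ⟨fun a ha => ?_, fun b hb => ?_⟩
    · rw [Finset.mem_compl, Finset.mem_image]
      rintro ⟨p, hp, rfl⟩
      have := Finset.mem_product.mp (h hp)
      exact Finset.mem_compl.mp this.1 ha
    · rw [Finset.mem_compl, Finset.mem_image]
      rintro ⟨p, hp, rfl⟩
      have := Finset.mem_product.mp (h hp)
      exact Finset.mem_compl.mp this.2 hb
  · rintro ⟨h1, h2⟩ p hp
    rw [Finset.mem_product, Finset.mem_compl, Finset.mem_compl]
    exact ⟨fun hpa => Finset.mem_compl.mp (h1 hpa) (Finset.mem_image_of_mem Prod.fst hp),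
      fun hpb => Finset.mem_compl.mp (h2 hpb) (Finset.mem_image_of_mem Prod.snd hp)⟩

lemma aux_powerset_eq_filter {γ : Type*} [Fintype γ] [DecidableEq γ] (R : Finset γ) :
    R.powerset = (Finset.univ : Finset (Finset γ)).filter (fun A => A ⊆ R) := by
  ext A; simp

lemma aux_IE :
    ∑ S ∈ (Finset.univ : Finset (Finset (α × β))).filter
        (fun S => (∀ a : α, ∃ b : β, (a, b) ∈ S) ∧ (∀ b : β, ∃ a : α, (a, b) ∈ S)),
      (Polynomial.X : Polynomial ℤ) ^ S.card
      = ∑ A : Finset α, ∑ B : Finset β,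
          (-1 : Polynomial ℤ) ^ (A.card + B.card)
            * (1 + Polynomial.X) ^ ((Fintype.card α - A.card) * (Fintype.card β - B.card)) := by
  have key : ∀ (A : Finset α) (B : Finset β),
      ((1 + Polynomial.X : Polynomial ℤ)) ^ ((Fintype.card α - A.card) * (Fintype.card β - B.card))
      = ∑ S : Finset (α × β),
          if A ⊆ (S.image Prod.fst)ᶜ ∧ B ⊆ (S.image Prod.snd)ᶜ
          then (Polynomial.X : Polynomial ℤ) ^ S.card else 0 := by
    intro A B
    have hcard : (Aᶜ ×ˢ Bᶜ).card = (Fintype.card α - A.card) * (Fintype.card β - B.card) := by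
      rw [Finset.card_product, Finset.card_compl, Finset.card_compl]
    rw [← hcard, ← aux_sum_powerset_pow, ← Finset.sum_filter]
    apply Finset.sum_congr _ (fun _ _ => rfl)
    ext S
    simp only [Finset.mem_powerset, Finset.mem_filter, Finset.mem_univ, true_and]
    exact aux_subset_iff A B S
  symm
  simp only [key, Finset.mul_sum]
  have swap1 : ∀ A : Finset α,
      (∑ B : Finset β, ∑ S : Finset (α × β),
        (-1 : Polynomial ℤ) ^ (A.card + B.card) *
          (if A ⊆ (S.image Prod.fst)ᶜ ∧ B ⊆ (S.image Prod.snd)ᶜ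
            then (Polynomial.X : Polynomial ℤ) ^ S.card else 0))
      = ∑ S : Finset (α × β), ∑ B : Finset β,
        (-1 : Polynomial ℤ) ^ (A.card + B.card) *
          (if A ⊆ (S.image Prod.fst)ᶜ ∧ B ⊆ (S.image Prod.snd)ᶜ
            then (Polynomial.X : Polynomial ℤ) ^ S.card else 0) :=
    fun A => Finset.sum_comm
  simp only [swap1]
  rw [Finset.sum_comm]
  rw [Finset.sum_filter]
  refine Finset.sum_congr rfl fun S _ => ?_
  have hterm : ∀ (A : Finset α) (B : Finset β),
      (-1 : Polynomial ℤ) ^ (A.card + B.card) *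
        (if A ⊆ (S.image Prod.fst)ᶜ ∧ B ⊆ (S.image Prod.snd)ᶜ
          then (Polynomial.X : Polynomial ℤ) ^ S.card else 0)
      = (if A ⊆ (S.image Prod.fst)ᶜ then (-1 : Polynomial ℤ) ^ A.card else 0) *
          ((if B ⊆ (S.image Prod.snd)ᶜ then (-1 : Polynomial ℤ) ^ B.card else 0) *
            (Polynomial.X : Polynomial ℤ) ^ S.card) := by
    intro A B
    by_cases h1 : A ⊆ (S.image Prod.fst)ᶜ <;> by_cases h2 : B ⊆ (S.image Prod.snd)ᶜ <;>
      simp [h1, h2, pow_add] <;> ring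
  simp only [hterm]
  rw [← Finset.sum_mul_sum]
  have e1 : (∑ A : Finset α, if A ⊆ (S.image Prod.fst)ᶜ then (-1 : Polynomial ℤ) ^ A.card else 0)
      = if (S.image Prod.fst)ᶜ = ∅ then 1 else 0 := by
    rw [← Finset.sum_filter, ← aux_powerset_eq_filter, aux_neg_one_powerset]
  have e2 : (∑ B : Finset β, if B ⊆ (S.image Prod.snd)ᶜ then (-1 : Polynomial ℤ) ^ B.card else 0)
      = if (S.image Prod.snd)ᶜ = ∅ then 1 else 0 := by
    rw [← Finset.sum_filter, ← aux_powerset_eq_filter, aux_neg_one_powerset]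
  have hmuls : ∀ B : Finset β, (if B ⊆ (S.image Prod.snd)ᶜ then (-1 : Polynomial ℤ) ^ B.card else 0) *
      (Polynomial.X : Polynomial ℤ) ^ S.card
      = (if B ⊆ (S.image Prod.snd)ᶜ then (-1 : Polynomial ℤ) ^ B.card else 0) *
        (Polynomial.X : Polynomial ℤ) ^ S.card := fun _ => rfl
  rw [show (∑ B : Finset β, (if B ⊆ (S.image Prod.snd)ᶜ then (-1 : Polynomial ℤ) ^ B.card else 0) *
      (Polynomial.X : Polynomial ℤ) ^ S.card)
      = (∑ B : Finset β, if B ⊆ (S.image Prod.snd)ᶜ then (-1 : Polynomial ℤ) ^ B.card else 0) *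
        (Polynomial.X : Polynomial ℤ) ^ S.card from (Finset.sum_mul _ _ _).symm]
  rw [e1, e2]
  have hc1 : (S.image Prod.fst)ᶜ = ∅ ↔ (∀ a : α, ∃ b : β, (a, b) ∈ S) := by
    rw [Finset.compl_eq_empty_iff, Finset.eq_univ_iff_forall]
    constructor
    · intro h a
      obtain ⟨p, hp, hpa⟩ := Finset.mem_image.mp (h a)
      exact ⟨p.2, by rwa [← hpa, Prod.mk.eta]⟩
    · intro h a
      obtain ⟨b, hb⟩ := h a
      exact Finset.mem_image.mpr ⟨(a, b), hb, rfl⟩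
  have hc2 : (S.image Prod.snd)ᶜ = ∅ ↔ (∀ b : β, ∃ a : α, (a, b) ∈ S) := by
    rw [Finset.compl_eq_empty_iff, Finset.eq_univ_iff_forall]
    constructor
    · intro h b
      obtain ⟨p, hp, hpb⟩ := Finset.mem_image.mp (h b)
      exact ⟨p.1, by rwa [← hpb, Prod.mk.eta]⟩
    · intro h b
      obtain ⟨a, ha⟩ := h b
      exact Finset.mem_image.mpr ⟨(a, b), ha, rfl⟩
  rw [if_congr hc1 rfl rfl, if_congr hc2 rfl rfl]
  by_cases hA : ∀ a : α, ∃ b : β, (a, b) ∈ S <;>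
    by_cases hB : ∀ b : β, ∃ a : α, (a, b) ∈ S <;>
      simp [hA, hB]

lemma aux_group {γ : Type*} [Fintype γ] [DecidableEq γ] (g : ℕ → Polynomial ℤ) :
    ∑ A : Finset γ, g A.card
      = ∑ j ∈ Finset.range (Fintype.card γ + 1),
          Polynomial.C ((Nat.choose (Fintype.card γ) j : ℤ)) * g j := by
  rw [← Finset.powerset_univ, Finset.sum_powerset, Finset.card_univ]
  refine Finset.sum_congr rfl fun j hj => ?_
  rw [Finset.sum_congr rfl (fun A hA => by rw [(Finset.mem_powersetCard.mp hA).2])]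
  rw [Finset.sum_const, Finset.card_powersetCard, Finset.card_univ, nsmul_eq_mul, map_natCast]

lemma aux_dom_iff (n m : ℕ) (S : Finset (Fin n × Fin m)) :
    IsDomSet n m S ↔
      ((∀ a : Fin n, ∃ b : Fin m, (a, b) ∈ S) ∨ (∀ b : Fin m, ∃ a : Fin n, (a, b) ∈ S)) := by
  constructor
  · intro h
    by_contra hc
    push_neg at hc
    obtain ⟨⟨a, ha⟩, ⟨b, hb⟩⟩ := hc
    rcases h (a, b) with hv | ⟨u, hu, hadj⟩
    · exact ha b hv
    · rcases hadj.2 with h1 | h2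
      · refine ha u.2 ?_
        have : (a, u.2) = u := by simp at h1; rw [← h1]
        rwa [this]
      · refine hb u.1 ?_
        have : (u.1, b) = u := by simp at h2; rw [← h2]
        rwa [this]
  · intro h v
    rcases h with h | h
    · obtain ⟨b, hb⟩ := h v.1
      by_cases he : (v.1, b) = v
      · left; rwa [he] at hb
      · right; exact ⟨(v.1, b), hb, he, Or.inl rfl⟩
    · obtain ⟨a, ha⟩ := h v.2
      by_cases he : (a, v.2) = v
      · left; rwa [he] at ha
      · right; exact ⟨(a, v.2), ha, he, Or.inr rfl⟩

/-- Corollary 5: symmetric form of the domination polynomial of the rook graph. -/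
theorem rook_domination_polynomial_symmetric (n m : ℕ) (hn : 1 ≤ n) (hm : 1 ≤ m) :
    domPoly n m =
      ((1 + Polynomial.X) ^ n - 1) ^ m + ((1 + Polynomial.X) ^ m - 1) ^ n -
        (-1 : Polynomial ℤ) ^ (n + m) *
          ∑ l ∈ Finset.range (n + 1), ∑ k ∈ Finset.range (m + 1),
            Polynomial.C (n.choose l : ℤ) * Polynomial.C (m.choose k : ℤ) *
              (-1 : Polynomial ℤ) ^ (k + l) * (1 + Polynomial.X) ^ (k * l) := by
  classical
  have hdom : domPoly n m
      = ∑ S ∈ (Finset.univ : Finset (Finset (Fin n × Fin m))).filter (IsDomSet n m),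
          (Polynomial.X : Polynomial ℤ) ^ S.card := by
    simp only [domPoly, domCount]
    exact aux_count_to_sum (IsDomSet n m) (n * m) (by simp)
  have hsplit : (Finset.univ : Finset (Finset (Fin n × Fin m))).filter (IsDomSet n m)
      = (Finset.univ.filter (fun S => ∀ a : Fin n, ∃ b : Fin m, (a, b) ∈ S))
        ∪ (Finset.univ.filter (fun S => ∀ b : Fin m, ∃ a : Fin n, (a, b) ∈ S)) := by
    ext S
    simp only [Finset.mem_filter, Finset.mem_union, Finset.mem_univ, true_and]
    rw [aux_dom_iff]
  have hinter : (Finset.univ.filter (fun S : Finset (Fin n × Fin m) => ∀ a : Fin n, ∃ b : Fin m, (a, b) ∈ S))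
        ∩ (Finset.univ.filter (fun S => ∀ b : Fin m, ∃ a : Fin n, (a, b) ∈ S))
      = Finset.univ.filter
          (fun S => (∀ a : Fin n, ∃ b : Fin m, (a, b) ∈ S) ∧ (∀ b : Fin m, ∃ a : Fin n, (a, b) ∈ S)) := by
    ext S
    simp only [Finset.mem_inter, Finset.mem_filter, Finset.mem_univ, true_and]
  have hsum := Finset.sum_union_inter
    (s₁ := Finset.univ.filter (fun S : Finset (Fin n × Fin m) => ∀ a : Fin n, ∃ b : Fin m, (a, b) ∈ S))
    (s₂ := Finset.univ.filter (fun S => ∀ b : Fin m, ∃ a : Fin n, (a, b) ∈ S))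
    (f := fun S => (Polynomial.X : Polynomial ℤ) ^ S.card)
  have h2 := eq_sub_of_add_eq hsum
  rw [hdom, hsplit, h2, hinter]
  have hr : ∑ S ∈ (Finset.univ : Finset (Finset (Fin n × Fin m))).filter
        (fun S => ∀ a : Fin n, ∃ b : Fin m, (a, b) ∈ S),
      (Polynomial.X : Polynomial ℤ) ^ S.card = ((1 + Polynomial.X) ^ m - 1) ^ n := by
    have h := aux_rows_gf (α := Fin n) (β := Fin m)
    simp only [Fintype.card_fin] at h
    convert h using 3
  have hc : ∑ S ∈ (Finset.univ : Finset (Finset (Fin n × Fin m))).filter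
        (fun S => ∀ b : Fin m, ∃ a : Fin n, (a, b) ∈ S),
      (Polynomial.X : Polynomial ℤ) ^ S.card = ((1 + Polynomial.X) ^ n - 1) ^ m := by
    have h := aux_cols_gf (α := Fin n) (β := Fin m)
    simp only [Fintype.card_fin] at h
    convert h using 3
  have hE : ∑ S ∈ (Finset.univ : Finset (Finset (Fin n × Fin m))).filter
        (fun S => (∀ a : Fin n, ∃ b : Fin m, (a, b) ∈ S) ∧ (∀ b : Fin m, ∃ a : Fin n, (a, b) ∈ S)),
      (Polynomial.X : Polynomial ℤ) ^ S.card
      = ∑ A : Finset (Fin n), ∑ B : Finset (Fin m),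
          (-1 : Polynomial ℤ) ^ (A.card + B.card)
            * (1 + Polynomial.X) ^ ((n - A.card) * (m - B.card)) := by
    have h := aux_IE (α := Fin n) (β := Fin m)
    simp only [Fintype.card_fin] at h
    convert h using 3
  have hD : (∑ A : Finset (Fin n), ∑ B : Finset (Fin m),
        (-1 : Polynomial ℤ) ^ (A.card + B.card) * (1 + Polynomial.X) ^ ((n - A.card) * (m - B.card)))
      = (-1 : Polynomial ℤ) ^ (n + m) *
          ∑ l ∈ Finset.range (n + 1), ∑ k ∈ Finset.range (m + 1),
            Polynomial.C (n.choose l : ℤ) * Polynomial.C (m.choose k : ℤ) *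
              (-1 : Polynomial ℤ) ^ (k + l) * (1 + Polynomial.X) ^ (k * l) := by
    rw [aux_group (g := fun j => ∑ B : Finset (Fin m),
      (-1 : Polynomial ℤ) ^ (j + B.card) * (1 + Polynomial.X) ^ ((n - j) * (m - B.card)))]
    simp only [Fintype.card_fin]
    have hstep : ∀ j : ℕ,
        (∑ B : Finset (Fin m),
          (-1 : Polynomial ℤ) ^ (j + B.card) * (1 + Polynomial.X) ^ ((n - j) * (m - B.card)))
        = ∑ i ∈ Finset.range (m + 1), Polynomial.C ((m.choose i : ℤ)) *
            ((-1 : Polynomial ℤ) ^ (j + i) * (1 + Polynomial.X) ^ ((n - j) * (m - i))) := by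
      intro j
      rw [aux_group (g := fun i =>
        (-1 : Polynomial ℤ) ^ (j + i) * (1 + Polynomial.X) ^ ((n - j) * (m - i)))]
      simp only [Fintype.card_fin]
    simp only [hstep]
    rw [Finset.mul_sum]
    rw [← Finset.sum_range_reflect]
    refine Finset.sum_congr rfl fun l hl => ?_
    have hl' : l ≤ n := Nat.lt_succ_iff.mp (Finset.mem_range.mp hl)
    simp only [Nat.add_sub_cancel]
    rw [Finset.mul_sum, Finset.mul_sum, ← Finset.sum_range_reflect]
    refine Finset.sum_congr rfl fun k hk => ?_
    have hk' : k ≤ m := Nat.lt_succ_iff.mp (Finset.mem_range.mp hk)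
    simp only [Nat.add_sub_cancel]
    rw [Nat.choose_symm hl', Nat.choose_symm hk', Nat.sub_sub_self hl', Nat.sub_sub_self hk']
    have hsign : ((-1 : Polynomial ℤ)) ^ ((n - l) + (m - k))
        = (-1 : Polynomial ℤ) ^ (n + m) * (-1 : Polynomial ℤ) ^ (k + l) := by
      have h2' : ((-1 : Polynomial ℤ)) ^ ((k + l) + (k + l)) = 1 := by
        rw [← two_mul, pow_mul]; norm_num
      have h1' : ((-1 : Polynomial ℤ)) ^ ((n - l) + (m - k)) * (-1) ^ (k + l) = (-1) ^ (n + m) := by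
        rw [← pow_add]
        congr 1
        omega
      calc ((-1 : Polynomial ℤ)) ^ ((n - l) + (m - k))
          = ((-1 : Polynomial ℤ)) ^ ((n - l) + (m - k)) * ((-1) ^ ((k + l) + (k + l))) := by
            rw [h2', mul_one]
        _ = (((-1 : Polynomial ℤ)) ^ ((n - l) + (m - k)) * (-1) ^ (k + l)) * (-1) ^ (k + l) := by
            rw [pow_add ((-1 : Polynomial ℤ)) (k+l) (k+l)]; ring
        _ = (-1 : Polynomial ℤ) ^ (n + m) * (-1) ^ (k + l) := by rw [h1']
    rw [hsign, Nat.mul_comm l k]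
    ring
  linear_combination hr + hc - hE - hD
end
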